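/- Let σ = Σ_{k=1}^m σ_k |k⟩⟨k| be a full-rank state with simple spectrum on an m-dimensional Hilbert space, E ⊂ {1,…,m}² a set of edges, and L_E the generator L_E(X) = Σ_{(r,s)∈E}[ (σ_r/σ_s)^{1/2}(E_{ss}X − E_{sr}XE_{rs}) + (σ_s/σ_r)^{1/2}(XE_{rr} − E_{rs}XE_{sr}) ], where E_{rs} = |r⟩⟨s|. Then (i) L_E maps the algebra of diagonal matrices (in the basis {|k⟩}) into itself, and (ii) if E is irreducible (the undirected graph on vertices {1,…,m} with edge set Ẽ = E ∪ {(s,r):(r,s)∈E} is connected), then L_E is primitive, i.e. σ is the unique invariant state of the semigroup e^{−tL_{E*}}. -/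

import Mathlib

noncomputable section

open Matrix MeasureTheory
open scoped Kronecker ComplexOrder

attribute [local instance] Matrix.frobeniusNormedAddCommGroup Matrix.frobeniusNormedSpace
attribute [local instance] Classical.propDecidable

/-- Logarithm of a Hermitian matrix via the spectral functional calculus
(junk value `0` on non-Hermitian matrices). -/
def mlog {n : Type*} [Fintype n] [DecidableEq n] (A : Matrix n n ℂ) : Matrix n n ℂ :=
  if h : A.IsHermitian then h.cfc Real.log else 0

/-- Square root of a positive semidefinite matrix (junk value `0` otherwise). -/
def msqrt {n : Type*} [Fintype n] [DecidableEq n] (A : Matrix n n ℂ) : Matrix n n ℂ :=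
  if h : A.PosSemidef then
    (h.1.eigenvectorUnitary : Matrix n n ℂ) * diagonal ((↑) ∘ (√·) ∘ h.1.eigenvalues) *
      (star h.1.eigenvectorUnitary : Matrix n n ℂ)
  else 0

/-- Real power of a Hermitian matrix via the spectral functional calculus. -/
def mpow {n : Type*} [Fintype n] [DecidableEq n] (A : Matrix n n ℂ) (p : ℝ) : Matrix n n ℂ :=
  if h : A.IsHermitian then h.cfc (fun x => Real.rpow x p) else 0

/-- The map `Γ_σ(X) = σ^{1/2} X σ^{1/2}`. -/
def Gam {n : Type*} [Fintype n] [DecidableEq n] (σ X : Matrix n n ℂ) : Matrix n n ℂ :=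
  msqrt σ * X * msqrt σ

/-- A density matrix: positive semidefinite with unit trace. -/
def IsDensity {n : Type*} [Fintype n] (ρ : Matrix n n ℂ) : Prop :=
  ρ.PosSemidef ∧ ρ.trace = 1

/-- Quantum relative entropy `D(ρ‖σ) = tr(ρ(ln ρ − ln σ))`. -/
def relEnt {n : Type*} [Fintype n] [DecidableEq n] (ρ σ : Matrix n n ℂ) : ℝ :=
  ((ρ * (mlog ρ - mlog σ)).trace).re

/-- Lindblad's relative entropy for non-normalized positive operators:
`D_Lin(ρ‖σ) = tr(ρ(ln ρ − ln σ)) + tr σ − tr ρ`. -/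
def DLin {n : Type*} [Fintype n] [DecidableEq n] (ρ σ : Matrix n n ℂ) : ℝ :=
  ((ρ * (mlog ρ - mlog σ)).trace).re + (σ.trace).re - (ρ.trace).re

/-- GKLS generator (Heisenberg picture) of a detailed-balance quantum Markov semigroup:
`L(X) = −Σ_j (e^{−ω_j/2} A_j^*[X,A_j] + e^{ω_j/2}[A_j,X]A_j^*)`. -/
def lindbladGen {n : Type*} [Fintype n] {J : Type*} [Fintype J]
    (A : J → Matrix n n ℂ) (ω : J → ℝ) (X : Matrix n n ℂ) : Matrix n n ℂ :=
  -∑ j, ((Real.exp (-ω j / 2) : ℂ) • ((A j)ᴴ * (X * A j - A j * X)) +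
         (Real.exp (ω j / 2) : ℂ) • ((A j * X - X * A j) * (A j)ᴴ))

/-- Trace adjoint (Schrödinger picture generator):
`L_*(ρ) = Σ_j e^{−ω_j/2}(A_j^*A_jρ − A_jρA_j^*) + e^{ω_j/2}(ρA_jA_j^* − A_j^*ρA_j)`. -/
def lindbladStar {n : Type*} [Fintype n] {J : Type*} [Fintype J]
    (A : J → Matrix n n ℂ) (ω : J → ℝ) (ρ : Matrix n n ℂ) : Matrix n n ℂ :=
  ∑ j, ((Real.exp (-ω j / 2) : ℂ) • ((A j)ᴴ * A j * ρ - A j * ρ * (A j)ᴴ) +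
        (Real.exp (ω j / 2) : ℂ) • (ρ * (A j * (A j)ᴴ) - (A j)ᴴ * ρ * A j))

/-- Entropy production `EP_L(ρ) = tr(L_*(ρ)(ln ρ − ln σ))` (extended to
non-normalized positive `ρ`), where `σ` is the reference (invariant) state. -/
def EP {n : Type*} [Fintype n] [DecidableEq n] {J : Type*} [Fintype J]
    (A : J → Matrix n n ℂ) (ω : J → ℝ) (σ ρ : Matrix n n ℂ) : ℝ :=
  ((lindbladStar A ω ρ * (mlog ρ - mlog σ)).trace).re

/-- Modified logarithmic Sobolev constant of a primitive semigroup with invariant state `σ`: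
the largest `α` with `α D(ρ‖σ) ≤ EP_L(ρ)` for all densities `ρ`. -/
def mlsiConst {n : Type*} [Fintype n] [DecidableEq n] {J : Type*} [Fintype J]
    (A : J → Matrix n n ℂ) (ω : J → ℝ) (σ : Matrix n n ℂ) : ℝ :=
  sSup {α : ℝ | ∀ ρ : Matrix n n ℂ, IsDensity ρ → α * relEnt ρ σ ≤ EP A ω σ ρ}

/-- Partial trace over the first tensor factor. -/
def ptraceFst {n m : Type*} [Fintype n] (ρ : Matrix (n × m) (n × m) ℂ) : Matrix m m ℂ :=
  Matrix.of fun a b => ∑ i, ρ (i, a) (i, b)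

/-- Partial trace over the second tensor factor. -/
def ptraceSnd {n m : Type*} [Fintype m] (ρ : Matrix (n × m) (n × m) ℂ) : Matrix n n ℂ :=
  Matrix.of fun i j => ∑ a, ρ (i, a) (j, a)

/-- Complete modified logarithmic Sobolev constant (primitive case): the largest `α` with
`α D(ρ‖(E_*⊗id_R)(ρ)) ≤ EP_{L⊗id_R}(ρ)` for every finite-dimensional reference system `R`
and every density `ρ` on `H ⊗ H_R`; here `(E_*⊗id_R)(ρ) = σ ⊗ tr_H ρ`. -/
def clsiConst {n : Type*} [Fintype n] [DecidableEq n] {J : Type*} [Fintype J]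
    (A : J → Matrix n n ℂ) (ω : J → ℝ) (σ : Matrix n n ℂ) : ℝ :=
  sSup {α : ℝ | ∀ (r : ℕ) (ρ : Matrix (n × Fin r) (n × Fin r) ℂ), IsDensity ρ →
    α * relEnt ρ (σ ⊗ₖ ptraceFst ρ) ≤
      EP (fun j => A j ⊗ₖ (1 : Matrix (Fin r) (Fin r) ℂ)) ω (σ ⊗ₖ ptraceFst ρ) ρ}

/-- `Φ ⊗ id` of a superoperator `Φ`, acting on matrices over a product index set. -/
def tensorIdFun {n m : Type*} (Φ : Matrix n n ℂ → Matrix n n ℂ)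
    (ρ : Matrix (n × m) (n × m) ℂ) : Matrix (n × m) (n × m) ℂ :=
  Matrix.of fun p q => Φ (Matrix.of fun i j => ρ (i, p.2) (j, q.2)) p.1 q.1

/-- Double operator integral `[ρ]_ω^{-1} = ∫_0^∞ (r + e^{−ω/2}L_ρ)^{−1}(r + e^{ω/2}R_ρ)^{−1} dr`
applied to `X`. -/
def doiInv {n : Type*} [Fintype n] [DecidableEq n] (ρ : Matrix n n ℂ) (ω : ℝ)
    (X : Matrix n n ℂ) : Matrix n n ℂ :=
  ∫ r in Set.Ioi (0 : ℝ),
    ((r : ℂ) • (1 : Matrix n n ℂ) + (Real.exp (-ω / 2) : ℂ) • ρ)⁻¹ * X *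
      ((r : ℂ) • (1 : Matrix n n ℂ) + (Real.exp (ω / 2) : ℂ) • ρ)⁻¹

/-- Operator (spectral) norm `‖X‖_∞` of a matrix. -/
def opN {n : Type*} [Fintype n] [DecidableEq n] (X : Matrix n n ℂ) : ℝ :=
  ‖Matrix.toEuclideanCLM (𝕜 := ℂ) X‖


/-- The generator `L_E` associated to a set of edges `E` and a nondegenerate full-rank state
with eigenvalues `s`:
`L_E(X) = Σ_{(r,s)∈E} [(σ_r/σ_s)^{1/2}(E_{ss}X − E_{sr}XE_{rs}) + (σ_s/σ_r)^{1/2}(XE_{rr} − E_{rs}XE_{sr})]`. -/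
def LEgen {m : ℕ} (E : Finset (Fin m × Fin m)) (s : Fin m → ℝ)
    (X : Matrix (Fin m) (Fin m) ℂ) : Matrix (Fin m) (Fin m) ℂ :=
  ∑ e ∈ E,
    ((Real.sqrt (s e.1 / s e.2) : ℂ) •
        (Matrix.single e.2 e.2 1 * X -
          Matrix.single e.2 e.1 1 * X * Matrix.single e.1 e.2 1) +
      (Real.sqrt (s e.2 / s e.1) : ℂ) •
        (X * Matrix.single e.1 e.1 1 -
          Matrix.single e.1 e.2 1 * X * Matrix.single e.2 e.1 1))

/-- The trace adjoint (Schrödinger picture) of `L_E`, with Lindblad operators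
`E_{rs}, E_{sr}` for `(r,s) ∈ E` and Bohr frequencies `ω_{rs} = ln σ_s − ln σ_r`. -/
def LEstar {m : ℕ} (E : Finset (Fin m × Fin m)) (s : Fin m → ℝ)
    (ρ : Matrix (Fin m) (Fin m) ℂ) : Matrix (Fin m) (Fin m) ℂ :=
  ∑ e ∈ E,
    ((Real.sqrt (s e.1 / s e.2) : ℂ) •
        (Matrix.single e.2 e.2 1 * ρ + ρ * Matrix.single e.2 e.2 1 -
          2 • (Matrix.single e.1 e.2 1 * ρ * Matrix.single e.2 e.1 1)) +
      (Real.sqrt (s e.2 / s e.1) : ℂ) •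
        (Matrix.single e.1 e.1 1 * ρ + ρ * Matrix.single e.1 e.1 1 -
          2 • (Matrix.single e.2 e.1 1 * ρ * Matrix.single e.1 e.2 1)))

/-- A set of edges `E ⊂ {1,…,m}²` is irreducible if the undirected graph on `{1,…,m}` with
edge set `Ẽ = E ∪ {(s,r) : (r,s) ∈ E}` is connected. -/
def IsIrreducibleEdgeSet {m : ℕ} (E : Finset (Fin m × Fin m)) : Prop :=
  (SimpleGraph.fromRel fun a b => (a, b) ∈ E).Connected


private lemma mulE1 {m : ℕ} (a b i j : Fin m) (ρ : Matrix (Fin m) (Fin m) ℂ) :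
    (Matrix.single a b 1 * ρ : Matrix (Fin m) (Fin m) ℂ) i j
      = if a = i then ρ b j else 0 := by
  simp [Matrix.mul_apply, Matrix.single, ite_and]

private lemma mulE2 {m : ℕ} (a b i j : Fin m) (ρ : Matrix (Fin m) (Fin m) ℂ) :
    (ρ * Matrix.single a b 1 : Matrix (Fin m) (Fin m) ℂ) i j
      = if b = j then ρ i a else 0 := by
  simp [Matrix.mul_apply, Matrix.single, ite_and]

private lemma mulE3 {m : ℕ} (a b c d i j : Fin m) (ρ : Matrix (Fin m) (Fin m) ℂ) :
    (Matrix.single a b 1 * ρ * Matrix.single c d 1 : Matrix (Fin m) (Fin m) ℂ) i j =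
      if d = j then (if a = i then ρ b c else 0) else 0 := by
  simp [Matrix.mul_apply, Matrix.single, ite_and]

private lemma LEstar_apply {m : ℕ} (E : Finset (Fin m × Fin m)) (s : Fin m → ℝ)
    (ρ : Matrix (Fin m) (Fin m) ℂ) (i j : Fin m) :
    LEstar E s ρ i j = ∑ e ∈ E,
      ((Real.sqrt (s e.1 / s e.2) : ℂ) *
        ((if e.2 = i then ρ e.2 j else 0) + (if e.2 = j then ρ i e.2 else 0) -
          2 * (if e.1 = j then if e.1 = i then ρ e.2 e.2 else 0 else 0)) +
       (Real.sqrt (s e.2 / s e.1) : ℂ) *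
        ((if e.1 = i then ρ e.1 j else 0) + (if e.1 = j then ρ i e.1 else 0) -
          2 * (if e.2 = j then if e.2 = i then ρ e.1 e.1 else 0 else 0))) := by
  unfold LEstar
  rw [Matrix.sum_apply]
  refine Finset.sum_congr rfl fun e _ => ?_
  simp only [Matrix.add_apply, Matrix.sub_apply, Matrix.smul_apply]
  simp only [mulE1, mulE2, mulE3, smul_eq_mul, nsmul_eq_mul, Nat.cast_ofNat]

private lemma LEstar_offdiag {m : ℕ} (E : Finset (Fin m × Fin m)) (s : Fin m → ℝ)
    (ρ : Matrix (Fin m) (Fin m) ℂ) {i j : Fin m} (hij : i ≠ j) :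
    LEstar E s ρ i j = ((∑ e ∈ E,
      (Real.sqrt (s e.1 / s e.2) *
          ((if e.2 = i then 1 else 0) + (if e.2 = j then 1 else 0)) +
        Real.sqrt (s e.2 / s e.1) *
          ((if e.1 = i then 1 else 0) + (if e.1 = j then 1 else 0))) : ℝ) : ℂ) * ρ i j := by
  rw [LEstar_apply]
  push_cast
  rw [Finset.sum_mul]
  refine Finset.sum_congr rfl fun e _ => ?_
  split_ifs <;> subst_vars <;>
    first
      | (push_cast; ring1)
      | (push_cast; simp_all; try ring1; done)
      | (exfalso; simp_all; done)

private lemma LEstar_diag {m : ℕ} (E : Finset (Fin m × Fin m)) (s : Fin m → ℝ)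
    (ρ : Matrix (Fin m) (Fin m) ℂ) (p : Fin m → ℝ)
    (hreal : ∀ x, ρ x x = ((p x : ℝ) : ℂ)) (k : Fin m) :
    LEstar E s ρ k k = ((∑ e ∈ E,
      2 * (((if e.2 = k then 1 else 0) - (if e.1 = k then 1 else 0)) *
        (Real.sqrt (s e.1 / s e.2) * p e.2 - Real.sqrt (s e.2 / s e.1) * p e.1)) : ℝ) : ℂ) := by
  rw [LEstar_apply]
  push_cast
  refine Finset.sum_congr rfl fun e _ => ?_
  by_cases h2 : e.2 = k <;> by_cases h1 : e.1 = k <;>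
    first
      | (simp only [h2, h1, if_true, if_false, ite_true, ite_false, eq_self_iff_true];
         push_cast [hreal]; ring1)
      | (simp [h2, h1, hreal]; push_cast; ring1)
      | (simp [h2, h1, hreal])

private lemma sqrt_div_mul {a b : ℝ} (ha : 0 < a) (hb : 0 < b) :
    Real.sqrt (a / b) * b = Real.sqrt (a * b) := by
  rw [Real.sqrt_div ha.le, div_mul_eq_mul_div, mul_div_assoc, Real.div_sqrt,
    Real.sqrt_mul ha.le]

/-- **Lemma `erg2`:** `L_E` leaves the diagonal algebra invariant, and if `E` is
irreducible then `L_E` is primitive: the only invariant density of `e^{-tL_{E*}}` is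
`σ = Σ_k σ_k |k⟩⟨k|`. -/
theorem LE_diag_invariant_and_primitive {m : ℕ}
    (E : Finset (Fin m × Fin m)) (s : Fin m → ℝ)
    (hs : ∀ i, 0 < s i) (hsum : ∑ i, s i = 1) (hsimple : Function.Injective s) :
    (∀ D : Fin m → ℂ, ∃ D' : Fin m → ℂ,
        LEgen E s (Matrix.diagonal D) = Matrix.diagonal D') ∧
      (IsIrreducibleEdgeSet E →
        ∀ ρ : Matrix (Fin m) (Fin m) ℂ, IsDensity ρ → LEstar E s ρ = 0 →
          ρ = Matrix.diagonal fun i => (s i : ℂ)) := by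
  constructor
  · -- L_E maps diagonal matrices to diagonal matrices
    intro D
    refine ⟨fun k => LEgen E s (Matrix.diagonal D) k k, ?_⟩
    ext i j
    by_cases hij : i = j
    · subst hij; simp [Matrix.diagonal_apply_eq]
    · rw [Matrix.diagonal_apply_ne _ hij]
      unfold LEgen
      rw [Matrix.sum_apply]
      refine Finset.sum_eq_zero fun e _ => ?_
      simp only [Matrix.add_apply, Matrix.sub_apply, Matrix.smul_apply]
      simp only [mulE1, mulE2, mulE3, smul_eq_mul, Matrix.diagonal_apply]
      split_ifs <;> subst_vars <;>
        first
          | ring1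
          | (simp_all; try ring1; done)
          | (exfalso; simp_all; done)
  · -- primitivity
    intro hconn' ρ hρ hL
    have hconn : (SimpleGraph.fromRel fun a b : Fin m => (a, b) ∈ E).Connected := hconn'
    have hGadj : ∀ a b : Fin m,
        (SimpleGraph.fromRel fun a b : Fin m => (a, b) ∈ E).Adj a b →
          a ≠ b ∧ ((a, b) ∈ E ∨ (b, a) ∈ E) := by
      intro a b hab
      simpa [SimpleGraph.fromRel_adj] using hab
    have hE0 : ∀ i j, LEstar E s ρ i j = 0 := by
      intro i j; rw [hL]; rfl
    have hcpos : ∀ a b : Fin m, 0 < Real.sqrt (s a / s b) :=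
      fun a b => Real.sqrt_pos.2 (div_pos (hs a) (hs b))
    -- Step B: ρ is diagonal
    have hdiag : ∀ i j : Fin m, i ≠ j → ρ i j = 0 := by
      intro i j hij
      have h2 : ((∑ e ∈ E,
          (Real.sqrt (s e.1 / s e.2) *
              ((if e.2 = i then 1 else 0) + (if e.2 = j then 1 else 0)) +
            Real.sqrt (s e.2 / s e.1) *
              ((if e.1 = i then 1 else 0) + (if e.1 = j then 1 else 0))) : ℝ) : ℂ) * ρ i j
          = 0 := by
        rw [← LEstar_offdiag E s ρ hij]; exact hE0 i j
      obtain ⟨c, hic⟩ : ∃ c, (SimpleGraph.fromRel fun a b : Fin m => (a, b) ∈ E).Adj i c := by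
        obtain ⟨wk⟩ := hconn.preconnected i j
        cases wk with
        | nil => exact absurd rfl hij
        | cons h p => exact ⟨_, h⟩
      have hwpos : (0 : ℝ) < ∑ e ∈ E,
          (Real.sqrt (s e.1 / s e.2) *
              ((if e.2 = i then 1 else 0) + (if e.2 = j then 1 else 0)) +
            Real.sqrt (s e.2 / s e.1) *
              ((if e.1 = i then 1 else 0) + (if e.1 = j then 1 else 0))) := by
        refine Finset.sum_pos' (fun e _ => ?_) ?_
        · have h1 := (hcpos e.1 e.2).le
          have h2 := (hcpos e.2 e.1).le
          split_ifs <;> nlinarith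
        · rcases (hGadj i c hic).2 with h | h
          · refine ⟨(i, c), h, ?_⟩
            have h1 := hcpos c i
            have h2 := (hcpos i c).le
            simp only [if_pos rfl]
            split_ifs <;> nlinarith
          · refine ⟨(c, i), h, ?_⟩
            have h1 := hcpos c i
            have h2 := (hcpos i c).le
            simp only [if_pos rfl]
            split_ifs <;> nlinarith
      rcases mul_eq_zero.1 h2 with h | h
      · exact absurd h (by exact_mod_cast hwpos.ne')
      · exact h
    -- diagonal entries are real
    obtain ⟨p, hreal⟩ : ∃ p : Fin m → ℝ, ∀ k, ρ k k = ((p k : ℝ) : ℂ) :=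
      ⟨fun k => (ρ k k).re, fun k =>
        (Complex.conj_eq_iff_re.1 (hρ.1.1.apply k k)).symm⟩
    set q : Fin m → ℝ := fun k => p k / s k with hq
    have hpq : ∀ k, p k = q k * s k := fun k =>
      (div_mul_cancel₀ _ (hs k).ne').symm
    -- Step C: classical stationarity of the diagonal
    have hg : ∀ k : Fin m, ∑ e ∈ E,
        2 * (((if e.2 = k then 1 else 0) - (if e.1 = k then 1 else 0)) *
          (Real.sqrt (s e.1 / s e.2) * p e.2 - Real.sqrt (s e.2 / s e.1) * p e.1)) = 0 := by
      intro k
      have h2 := (LEstar_diag E s ρ p hreal k).symm.trans (hE0 k k)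
      exact_mod_cast h2
    have hsum0 : ∑ e ∈ E, 2 * (Real.sqrt (s e.1 * s e.2) * (q e.2 - q e.1) ^ 2) = 0 := by
      have hf : ∀ e : Fin m × Fin m,
          Real.sqrt (s e.1 / s e.2) * p e.2 - Real.sqrt (s e.2 / s e.1) * p e.1
            = Real.sqrt (s e.1 * s e.2) * (q e.2 - q e.1) := by
        intro e
        rw [hpq e.1, hpq e.2, mul_comm (q e.2) (s e.2), mul_comm (q e.1) (s e.1),
          ← mul_assoc, ← mul_assoc, sqrt_div_mul (hs e.1) (hs e.2),
          sqrt_div_mul (hs e.2) (hs e.1), mul_comm (s e.2) (s e.1)]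
        ring
      have hEq : ∑ e ∈ E, 2 * (Real.sqrt (s e.1 * s e.2) * (q e.2 - q e.1) ^ 2)
          = ∑ k, q k * (∑ e ∈ E,
            2 * (((if e.2 = k then 1 else 0) - (if e.1 = k then 1 else 0)) *
              (Real.sqrt (s e.1 / s e.2) * p e.2 - Real.sqrt (s e.2 / s e.1) * p e.1))) := by
        simp only [Finset.mul_sum]
        rw [Finset.sum_comm]
        refine Finset.sum_congr rfl fun e _ => ?_
        rw [show (∑ k, q k * (2 * (((if e.2 = k then 1 else 0) - (if e.1 = k then 1 else 0)) *
            (Real.sqrt (s e.1 / s e.2) * p e.2 - Real.sqrt (s e.2 / s e.1) * p e.1))))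
            = (∑ k, (if e.2 = k then q k else 0) * (2 * (Real.sqrt (s e.1 / s e.2) * p e.2
                - Real.sqrt (s e.2 / s e.1) * p e.1)))
              - (∑ k, (if e.1 = k then q k else 0) * (2 * (Real.sqrt (s e.1 / s e.2) * p e.2
                - Real.sqrt (s e.2 / s e.1) * p e.1))) from by
          rw [← Finset.sum_sub_distrib]
          refine Finset.sum_congr rfl fun k _ => ?_
          split_ifs <;> ring]
        simp only [ite_mul, zero_mul]
        rw [Finset.sum_ite_eq, Finset.sum_ite_eq]
        simp only [Finset.mem_univ, if_true]
        rw [hf e]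
        ring
      rw [hEq]
      exact Finset.sum_eq_zero fun k _ => by rw [hg k, mul_zero]
    have hqe : ∀ e ∈ E, q e.2 = q e.1 := by
      intro e he
      have hterm : 2 * (Real.sqrt (s e.1 * s e.2) * (q e.2 - q e.1) ^ 2) = 0 :=
        (Finset.sum_eq_zero_iff_of_nonneg fun e' _ => by positivity).1 hsum0 e he
      have hsq : 0 < Real.sqrt (s e.1 * s e.2) :=
        Real.sqrt_pos.2 (mul_pos (hs e.1) (hs e.2))
      have h5 : Real.sqrt (s e.1 * s e.2) * (q e.2 - q e.1) ^ 2 = 0 := by linarith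
      have h6 : (q e.2 - q e.1) ^ 2 = 0 := by
        rcases mul_eq_zero.1 h5 with h | h
        · exact absurd h hsq.ne'
        · exact h
      have h7 := pow_eq_zero_iff (two_ne_zero) |>.1 h6
      have h8 := sub_eq_zero.1 h7
      linarith
    have hqadj : ∀ a b : Fin m,
        (SimpleGraph.fromRel fun a b : Fin m => (a, b) ∈ E).Adj a b → q a = q b := by
      intro a b hab
      rcases (hGadj a b hab).2 with h | h
      · exact (hqe (a, b) h).symm
      · exact hqe (b, a) h
    have hconst : ∀ a b : Fin m, q a = q b := by
      intro a b
      obtain ⟨wk⟩ := hconn.preconnected a b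
      induction wk with
      | nil => rfl
      | cons h _ ih => exact (hqadj _ _ h).trans ih
    obtain ⟨k0⟩ := hconn.nonempty
    have htr : ∑ k, p k = 1 := by
      have h1 : ∑ k, ρ k k = 1 := by
        rw [← hρ.2]; simp [Matrix.trace, Matrix.diag]
      have h2 : ((∑ k, p k : ℝ) : ℂ) = 1 := by
        rw [← h1]
        push_cast
        exact Finset.sum_congr rfl fun k _ => (hreal k).symm
      exact_mod_cast h2
    have hq1 : q k0 = 1 := by
      have h3 : ∑ k, p k = q k0 * ∑ k, s k := by
        rw [Finset.mul_sum]
        exact Finset.sum_congr rfl fun k _ => by rw [hpq k, hconst k0 k]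
      rw [htr, hsum, mul_one] at h3
      exact h3.symm
    have hps : ∀ k, p k = s k := by
      intro k
      rw [hpq k, hconst k k0, hq1, one_mul]
    ext i j
    by_cases hij : i = j
    · subst hij
      rw [Matrix.diagonal_apply_eq, hreal i]
      exact_mod_cast congrArg Complex.ofReal (hps i)
    · rw [Matrix.diagonal_apply_ne _ hij]
      exact hdiag i j hij
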